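/- Up to isomorphism, there is exactly one indecomposable cycle set of cardinality p^2 with multipermutational level 2 and permutation group isomorphic to Z/pZ × Z/pZ, namely Z/pZ × Z/pZ with (a,i)·(b,j) = (b+1, j+a). -/

import Mathlib

/-- A cycle set: a set with bijective left multiplications `σ x`
satisfying `(x·y)·(x·z) = (y·x)·(y·z)`. -/
structure CycleSet (X : Type*) where
  σ : X → Equiv.Perm X
  cycl : ∀ x y z : X, σ (σ x y) (σ x z) = σ (σ y x) (σ y z)

namespace CycleSet

variable {X Y : Type*}

/-- The permutation group generated by the left multiplications. -/
def permGroup (S : CycleSet X) : Subgroup (Equiv.Perm X) :=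
  Subgroup.closure (Set.range S.σ)

/-- Indecomposability: the permutation group acts transitively. -/
def Transitive (S : CycleSet X) : Prop :=
  ∀ x y : X, ∃ g ∈ S.permGroup, g x = y

/-- The permutation group is abelian. -/
def AbelianPerm (S : CycleSet X) : Prop :=
  ∀ g ∈ S.permGroup, ∀ h ∈ S.permGroup, g * h = h * g

/-- `rel S n x y` holds iff `x` and `y` become equal in the `n`-th iterated
retraction `σ^n(X)`. -/
def rel (S : CycleSet X) : ℕ → X → X → Prop
  | 0 => Eq
  | n + 1 => fun x y => ∀ z, S.rel n (S.σ x z) (S.σ y z)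

/-- The cardinality `|σ^n(X)|` of the `n`-th iterated retraction. -/
noncomputable def retCard (S : CycleSet X) (n : ℕ) : ℕ :=
  Nat.card (Quot (S.rel n))

/-- `X` is multipermutational of level `m`: `m` is minimal with `|σ^m(X)| = 1`. -/
def MultipermLevel (S : CycleSet X) (m : ℕ) : Prop :=
  (∀ x y, S.rel m x y) ∧ ∀ k < m, ¬ (∀ x y, S.rel k x y)

/-- Isomorphism of cycle sets. -/
def Isomorphic (S : CycleSet X) (T : CycleSet Y) : Prop :=
  ∃ F : X → Y, Function.Bijective F ∧ ∀ x y, F (S.σ x y) = T.σ (F x) (F y)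

end CycleSet


section StmtAux

private lemma pow_mod_p' {G : Type*} [Group G] {g : G} {p : ℕ} (hg : g ^ p = 1) (n : ℕ) :
    g ^ (n % p) = g ^ n := by
  conv_rhs => rw [← Nat.mod_add_div n p]
  rw [pow_add, pow_mul, hg, one_pow, mul_one]

private lemma pow_val_add' {G : Type*} [Group G] {g : G} {p : ℕ} [NeZero p]
    (hg : g ^ p = 1) (a b : ZMod p) :
    g ^ (a + b).val = g ^ a.val * g ^ b.val := by
  rw [ZMod.val_add, pow_mod_p' hg, pow_add]

private lemma mul_pow_mul' {G : Type*} [Group G] {a b : G} (h : Commute a b)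
    (n m n' m' : ℕ) :
    (a ^ n * b ^ m) * (a ^ n' * b ^ m') = a ^ (n + n') * b ^ (m + m') := by
  rw [pow_add, pow_add]
  exact Commute.mul_mul_mul_comm (h.symm.pow_pow m n') (a ^ n) (b ^ m')

private lemma aR_mul {A : Type*} [AddCommGroup A] (a b : A) :
    (Equiv.addRight a) * (Equiv.addRight b) = Equiv.addRight (b + a) :=
  Equiv.ext fun x => by simp [Equiv.Perm.mul_apply, add_assoc]

private lemma aR_one {A : Type*} [AddCommGroup A] :
    (Equiv.addRight (0 : A)) = 1 := Equiv.ext fun x => by simp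

private lemma aR_inv {A : Type*} [AddCommGroup A] (a : A) :
    (Equiv.addRight a)⁻¹ = Equiv.addRight (-a) := by
  apply inv_eq_of_mul_eq_one_left
  rw [aR_mul, add_neg_cancel, aR_one]

private lemma aR_inj {A : Type*} [AddCommGroup A] {a b : A}
    (h : Equiv.addRight a = Equiv.addRight b) : a = b := by
  have := congrArg (fun f : Equiv.Perm A => f 0) h
  simpa using this

/-- The model cycle set on `ZMod p × ZMod p`. -/
def modelCS (p : ℕ) : CycleSet (ZMod p × ZMod p) where
  σ x := Equiv.addRight (1, x.1)
  cycl x y z := by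
    simp only [Equiv.coe_addRight, Prod.ext_iff, Prod.fst_add, Prod.snd_add]
    exact ⟨trivial, by ring⟩

lemma modelCS_σ (p : ℕ) (a i b j : ZMod p) :
    (modelCS p).σ (a, i) (b, j) = (b + 1, j + a) := by
  show ((b, j) : ZMod p × ZMod p) + (1, a) = (b + 1, j + a)
  simp [Prod.ext_iff, add_comm]

/-- The translation homomorphism `v ↦ addRight v`. -/
def modelδ (p : ℕ) : Multiplicative (ZMod p × ZMod p) →* Equiv.Perm (ZMod p × ZMod p) where
  toFun v := Equiv.addRight v.toAdd
  map_one' := aR_one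
  map_mul' v w := by
    rw [aR_mul]
    exact congrArg Equiv.addRight (add_comm (Multiplicative.toAdd v) (Multiplicative.toAdd w))

lemma modelδ_inj (p : ℕ) : Function.Injective (modelδ p) := fun v w h => by
  have := aR_inj (show Equiv.addRight (Multiplicative.toAdd v)
      = Equiv.addRight (Multiplicative.toAdd w) from h)
  exact Multiplicative.toAdd.injective this

lemma model_permGroup (p : ℕ) [NeZero p] : (modelCS p).permGroup = (modelδ p).range := by
  apply le_antisymm
  · rw [CycleSet.permGroup, Subgroup.closure_le]
    rintro f ⟨x, rfl⟩
    exact ⟨Multiplicative.ofAdd (1, x.1), rfl⟩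
  · rintro f ⟨v, rfl⟩
    have h0 : ∀ a : ZMod p, Equiv.addRight ((1, a) : ZMod p × ZMod p) ∈ (modelCS p).permGroup :=
      fun a => Subgroup.subset_closure ⟨(a, 0), rfl⟩
    have h1 : ∀ t : ZMod p, Equiv.addRight ((0, t) : ZMod p × ZMod p) ∈ (modelCS p).permGroup := by
      intro t
      have : Equiv.addRight ((0, t) : ZMod p × ZMod p)
          = Equiv.addRight ((1, t) : ZMod p × ZMod p)
            * (Equiv.addRight ((1, 0) : ZMod p × ZMod p))⁻¹ := by
        rw [aR_inv, aR_mul, Prod.mk_add_mk]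
        norm_num
      rw [this]
      exact mul_mem (h0 t) (inv_mem (h0 0))
    have h2 : ∀ n : ℕ,
        Equiv.addRight (((n : ZMod p), 0) : ZMod p × ZMod p) ∈ (modelCS p).permGroup := by
      intro n
      induction n with
      | zero =>
        simp only [Nat.cast_zero, Prod.mk_zero_zero, aR_one]
        exact one_mem _
      | succ n ih =>
        have : Equiv.addRight ((((n+1 : ℕ) : ZMod p), 0) : ZMod p × ZMod p)
            = Equiv.addRight (((n : ZMod p), 0) : ZMod p × ZMod p) *
              Equiv.addRight (((1 : ZMod p), 0) : ZMod p × ZMod p) := by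
          rw [aR_mul, Prod.mk_add_mk]; push_cast; norm_num [add_comm]
        rw [this]
        have hone : Equiv.addRight (((1 : ZMod p), 0) : ZMod p × ZMod p)
            = Equiv.addRight ((1, (0:ZMod p))) * (Equiv.addRight ((0, (0:ZMod p))))⁻¹ := by
          rw [aR_inv, aR_mul, Prod.mk_add_mk]; norm_num
        exact mul_mem ih (by rw [hone]; exact mul_mem (h0 0) (inv_mem (h1 0)))
    have key : ∀ w : ZMod p × ZMod p, Equiv.addRight w ∈ (modelCS p).permGroup := by
      intro w
      have : Equiv.addRight w = Equiv.addRight (((w.1.val : ZMod p), 0) : ZMod p × ZMod p) *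
          Equiv.addRight ((0, w.2) : ZMod p × ZMod p) := by
        rw [aR_mul, Prod.mk_add_mk, ZMod.natCast_val, ZMod.cast_id]
        norm_num
      rw [this]
      exact mul_mem (h2 _) (h1 _)
    exact key _

lemma model_iso (p : ℕ) [NeZero p] :
    Nonempty ((modelCS p).permGroup ≃* Multiplicative (ZMod p × ZMod p)) :=
  ⟨(MulEquiv.subgroupCongr (model_permGroup p)).trans (MonoidHom.ofInjective (modelδ_inj p)).symm⟩

lemma model_trans (p : ℕ) [NeZero p] : (modelCS p).Transitive := by
  intro x y
  refine ⟨Equiv.addRight (y - x), ?_, by simp⟩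
  rw [model_permGroup]
  exact ⟨Multiplicative.ofAdd (y - x), rfl⟩

lemma model_level (p : ℕ) [Fact p.Prime] : (modelCS p).MultipermLevel 2 := by
  haveI : Fact (1 < p) := ⟨(Fact.out : p.Prime).one_lt⟩
  constructor
  · intro x y z w
    show (modelCS p).σ ((modelCS p).σ x z) w = (modelCS p).σ ((modelCS p).σ y z) w
    show w + (1, (z + (1, x.1)).1) = w + (1, (z + (1, y.1)).1)
    simp
  · intro k hk h
    have hk2 : k = 0 ∨ k = 1 := by omega
    rcases hk2 with rfl | rfl
    · have := h ((0 : ZMod p), (0 : ZMod p)) (1, 0)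
      have h1 : (0 : ZMod p) = 1 := congrArg Prod.fst this
      exact zero_ne_one h1
    · have h2 : (modelCS p).σ ((0:ZMod p), (0:ZMod p)) (0, 0) = (modelCS p).σ (1, 0) (0, 0) :=
        h ((0 : ZMod p), (0 : ZMod p)) (1, 0) ((0 : ZMod p), (0 : ZMod p))
      rw [modelCS_σ, modelCS_σ] at h2
      have h1 : (0 : ZMod p) + 0 = 0 + 1 := congrArg Prod.snd h2
      simp at h1

theorem model_uniq (p : ℕ) (hp : p.Prime) (X : Type) (S : CycleSet X)
    (hcard : Nat.card X = p ^ 2) (htr : S.Transitive) (hml : S.MultipermLevel 2)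
    (hiso : Nonempty (S.permGroup ≃* Multiplicative (ZMod p × ZMod p))) :
    ∃ F : ZMod p × ZMod p → X, Function.Bijective F ∧
      ∀ v w, F ((modelCS p).σ v w) = S.σ (F v) (F w) := by
  haveI : Fact p.Prime := ⟨hp⟩
  haveI : NeZero p := ⟨hp.ne_zero⟩
  obtain ⟨e⟩ := hiso
  -- basic facts about the permutation group
  have hmem : ∀ x, S.σ x ∈ S.permGroup := fun x => Subgroup.subset_closure ⟨x, rfl⟩
  have hcomm : ∀ g ∈ S.permGroup, ∀ h ∈ S.permGroup, g * h = h * g := by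
    intro g hg h hh
    have h1 : e (⟨g, hg⟩ * ⟨h, hh⟩) = e (⟨h, hh⟩ * ⟨g, hg⟩) := by
      rw [map_mul, map_mul, mul_comm]
    have h2 := e.injective h1
    exact congrArg Subtype.val h2
  have hexp : ∀ g ∈ S.permGroup, g ^ p = 1 := by
    intro g hg
    have hz : ∀ y : Multiplicative (ZMod p × ZMod p), y ^ p = 1 := by
      intro y
      have : p • (Multiplicative.toAdd y) = (0 : ZMod p × ZMod p) := by
        rcases Multiplicative.toAdd y with ⟨a, b⟩
        have hz1 : ∀ a : ZMod p, p • a = 0 := fun a => by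
          simp [nsmul_eq_mul, ZMod.natCast_self]
        exact Prod.ext (hz1 a) (hz1 b)
      rw [← ofAdd_toAdd y, ← ofAdd_nsmul, this, ofAdd_zero]
    have h1 : e (⟨g, hg⟩ ^ p) = e 1 := by rw [map_pow, map_one, hz]
    have h2 := e.injective h1
    exact congrArg Subtype.val h2
  -- a base point
  have hpos : 0 < Nat.card X := by rw [hcard]; exact pow_pos hp.pos 2
  obtain ⟨⟨e₀⟩, hfin⟩ := Nat.card_pos_iff.mp hpos
  -- level ≤ 2 : σ (σ x z) does not depend on x
  have hlvl : ∀ x y z : X, S.σ (S.σ x z) = S.σ (S.σ y z) := by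
    intro x y z
    exact Equiv.ext fun w => hml.1 x y z w
  -- the cycle-set law as a group identity
  have hcycl : ∀ x y : X, S.σ (S.σ x y) * S.σ x = S.σ (S.σ y x) * S.σ y := by
    intro x y
    exact Equiv.ext fun z => S.cycl x y z
  set s₀ : Equiv.Perm X := S.σ e₀ with hs₀
  set c : Equiv.Perm X := S.σ (S.σ e₀ e₀) * s₀⁻¹ with hc
  have hc_mem : c ∈ S.permGroup := mul_mem (hmem _) (inv_mem (hmem _))
  -- the fundamental relation σ (σ x z) = c * σ z
  have hR : ∀ x z : X, S.σ (S.σ x z) = c * S.σ z := by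
    intro x z
    have h1 : S.σ (S.σ z e₀) * S.σ z = S.σ (S.σ e₀ z) * s₀ := hcycl z e₀
    have h2 : S.σ (S.σ z e₀) = S.σ (S.σ e₀ e₀) := hlvl z e₀ e₀
    rw [h2] at h1
    have h3 : S.σ (S.σ e₀ z) = S.σ (S.σ e₀ e₀) * S.σ z * s₀⁻¹ := by
      rw [h1, mul_assoc, mul_inv_cancel, mul_one]
    have h4 : S.σ z * s₀⁻¹ = s₀⁻¹ * S.σ z :=
      hcomm _ (hmem z) _ (inv_mem (hmem e₀))
    have h5 : S.σ (S.σ e₀ z) = c * S.σ z := by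
      rw [h3, mul_assoc, h4, hc, mul_assoc]
    rw [hlvl x e₀ z, h5]
  have hRinv : ∀ x z : X, S.σ ((S.σ x)⁻¹ z) = c⁻¹ * S.σ z := by
    intro x z
    have := hR x ((S.σ x)⁻¹ z)
    rw [show ∀ (f : Equiv.Perm X) w, f (f⁻¹ w) = w from fun f w => f.apply_symm_apply w] at this
    rw [this, inv_mul_cancel_left]
  -- σ is invariant under c
  have hσc : ∀ z, S.σ (c z) = S.σ z := by
    intro z
    have h1 : c z = S.σ (S.σ e₀ e₀) (s₀⁻¹ z) := rfl
    rw [h1, hR (S.σ e₀ e₀) (s₀⁻¹ z)]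
    have h2 : S.σ ((s₀ : Equiv.Perm X)⁻¹ z) = c⁻¹ * S.σ z := hRinv e₀ z
    rw [h2, mul_inv_cancel_left]
  have hσcpow : ∀ (n : ℕ) (z : X), S.σ ((c ^ n) z) = S.σ z := by
    intro n
    induction n with
    | zero => intro z; simp
    | succ n ih =>
      intro z
      have : (c ^ (n + 1)) z = (c ^ n) (c z) := by
        rw [pow_succ, Equiv.Perm.mul_apply]
      rw [this, ih, hσc]
  have hσs : ∀ (n : ℕ) (z : X), S.σ ((s₀ ^ n) z) = c ^ n * S.σ z := by
    intro n
    induction n with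
    | zero => intro z; simp
    | succ n ih =>
      intro z
      have h1 : (s₀ ^ (n + 1)) z = s₀ ((s₀ ^ n) z) := by
        rw [pow_succ', Equiv.Perm.mul_apply]
      rw [h1, hR e₀ ((s₀ ^ n) z), ih, pow_succ', mul_assoc]
      rw [← mul_assoc, ← hc, ← mul_assoc]
  have hs₀_mem : s₀ ∈ S.permGroup := hmem e₀
  have hcs : Commute c s₀ := hcomm c hc_mem s₀ hs₀_mem
  have hcp : c ^ p = 1 := hexp c hc_mem
  have hsp : s₀ ^ p = 1 := hexp s₀ hs₀_mem
  have hcinv : c⁻¹ = c ^ (p - 1) := by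
    apply inv_eq_of_mul_eq_one_right
    have hpp : p - 1 + 1 = p := Nat.succ_pred_eq_of_pos hp.pos
    rw [← pow_succ', hpp, hcp]
  -- every σ x has the form c ^ k * s₀
  have hform : ∀ x : X, ∃ k : ℕ, S.σ x = c ^ k * s₀ := by
    have step : ∀ g ∈ S.permGroup, ∀ z : X,
        ((∃ k : ℕ, S.σ z = c ^ k * s₀) ↔ (∃ k : ℕ, S.σ (g z) = c ^ k * s₀)) := by
      intro g hg
      induction hg using Subgroup.closure_induction with
      | mem f hf =>
        obtain ⟨y, rfl⟩ := hf
        intro z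
        constructor
        · rintro ⟨k, hk⟩
          exact ⟨k + 1, by rw [hR y z, hk, ← mul_assoc, ← pow_succ']⟩
        · rintro ⟨k, hk⟩
          refine ⟨p - 1 + k, ?_⟩
          have h1 : S.σ (S.σ y z) = c * S.σ z := hR y z
          have h2 : S.σ z = c⁻¹ * (c ^ k * s₀) := by
            rw [← hk, h1, inv_mul_cancel_left]
          rw [h2, hcinv, ← mul_assoc, ← pow_add]
      | one => intro z; simp
      | mul a b ha hb iha ihb =>
        intro z
        have h1 : (a * b) z = a (b z) := rfl
        rw [h1]
        exact (ihb z).trans (iha (b z))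
      | inv a ha iha =>
        intro z
        have h1 := iha (a⁻¹ z)
        rw [show ∀ (f : Equiv.Perm X) w, f (f⁻¹ w) = w from fun f w => f.apply_symm_apply w] at h1
        exact h1.symm
    intro x
    obtain ⟨g, hg, hgx⟩ := htr e₀ x
    rw [← hgx]
    exact (step g hg e₀).mp ⟨0, by simp [hs₀]⟩
  -- every element of the permutation group has the form s₀ ^ n * c ^ m
  have hgen : ∀ g ∈ S.permGroup, ∃ n m : ℕ, g = s₀ ^ n * c ^ m := by
    intro g hg
    induction hg using Subgroup.closure_induction with
    | mem f hf =>
      obtain ⟨y, rfl⟩ := hf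
      obtain ⟨k, hk⟩ := hform y
      refine ⟨1, k, ?_⟩
      rw [hk, pow_one, (hcs.pow_left k).eq]
    | one => exact ⟨0, 0, by simp⟩
    | mul a b ha hb iha ihb =>
      obtain ⟨n, m, rfl⟩ := iha
      obtain ⟨n', m', rfl⟩ := ihb
      exact ⟨n + n', m + m', mul_pow_mul' hcs.symm n m n' m'⟩
    | inv a ha iha =>
      obtain ⟨n, m, rfl⟩ := iha
      refine ⟨n * (p - 1), m * (p - 1), ?_⟩
      apply inv_eq_of_mul_eq_one_right
      rw [mul_pow_mul' hcs.symm]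
      have hn : s₀ ^ (n + n * (p - 1)) = 1 := by
        obtain ⟨q, rfl⟩ : ∃ q, p = q + 1 := ⟨p - 1, (Nat.succ_pred_eq_of_pos hp.pos).symm⟩
        have : n + n * (q + 1 - 1) = (q + 1) * n := by
          simp [Nat.add_sub_cancel, Nat.succ_mul, Nat.mul_comm, Nat.add_comm]
        rw [this, pow_mul, hsp, one_pow]
      have hm : c ^ (m + m * (p - 1)) = 1 := by
        obtain ⟨q, rfl⟩ : ∃ q, p = q + 1 := ⟨p - 1, (Nat.succ_pred_eq_of_pos hp.pos).symm⟩
        have : m + m * (q + 1 - 1) = (q + 1) * m := by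
          simp [Nat.add_sub_cancel, Nat.succ_mul, Nat.mul_comm, Nat.add_comm]
        rw [this, pow_mul, hcp, one_pow]
      rw [hn, hm, one_mul]
  haveI : Fact (1 < p) := ⟨hp.one_lt⟩
  refine ⟨fun v => (s₀ ^ (v.1).val * c ^ (v.2).val) e₀, ?_, ?_⟩
  · letI : Fintype X := Fintype.ofFinite X
    rw [Fintype.bijective_iff_surjective_and_card]
    constructor
    · intro x
      obtain ⟨g, hg, hgx⟩ := htr e₀ x
      obtain ⟨n, m, rfl⟩ := hgen g hg
      refine ⟨((n : ZMod p), (m : ZMod p)), ?_⟩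
      show (s₀ ^ ((n : ZMod p)).val * c ^ ((m : ZMod p)).val) e₀ = _
      rw [ZMod.val_natCast, ZMod.val_natCast, pow_mod_p' hsp, pow_mod_p' hcp]
      exact hgx
    · rw [Fintype.card_prod, ZMod.card, ← Nat.card_eq_fintype_card, hcard, sq]
  · rintro ⟨a, i⟩ ⟨b, j⟩
    have hσF : S.σ ((s₀ ^ a.val * c ^ i.val) e₀) = c ^ a.val * s₀ := by
      have h1 : (s₀ ^ a.val * c ^ i.val) e₀ = (s₀ ^ a.val) ((c ^ i.val) e₀) := rfl
      rw [h1, hσs a.val, hσcpow i.val]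
    have hkey : s₀ ^ ((b + 1 : ZMod p)).val * c ^ ((j + a : ZMod p)).val
        = (c ^ a.val * s₀) * (s₀ ^ b.val * c ^ j.val) := by
      have h1 : c ^ a.val * s₀ = s₀ ^ 1 * c ^ a.val := by
        rw [pow_one, (hcs.pow_left a.val).eq]
      rw [h1, mul_pow_mul' hcs.symm 1 a.val b.val j.val,
        pow_val_add' hsp b 1, pow_val_add' hcp j a, ZMod.val_one, pow_one,
        ← pow_succ, ← pow_add, Nat.add_comm 1 b.val, Nat.add_comm j.val a.val]
    rw [modelCS_σ]
    show (s₀ ^ ((b + 1 : ZMod p)).val * c ^ ((j + a : ZMod p)).val) e₀ = _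
    rw [hσF, hkey]
    rfl
end StmtAux

/-- Up to isomorphism there is exactly one indecomposable cycle set of
cardinality `p^2`, multipermutational level 2, with permutation group
isomorphic to `Z/pZ × Z/pZ`: namely `(a,i)·(b,j) = (b+1, j+a)`. -/
theorem stmt16 (p : ℕ) (hp : p.Prime) :
    (∃ T : CycleSet (ZMod p × ZMod p),
      (∀ a i b j : ZMod p, T.σ (a, i) (b, j) = (b + 1, j + a)) ∧
        T.Transitive ∧ T.MultipermLevel 2 ∧
        Nonempty (T.permGroup ≃* Multiplicative (ZMod p × ZMod p))) ∧
    ∀ (X : Type) (S : CycleSet X), Nat.card X = p ^ 2 → S.Transitive →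
      S.MultipermLevel 2 →
      Nonempty (S.permGroup ≃* Multiplicative (ZMod p × ZMod p)) →
      ∃ T : CycleSet (ZMod p × ZMod p),
        (∀ a i b j : ZMod p, T.σ (a, i) (b, j) = (b + 1, j + a)) ∧
          S.Isomorphic T := by
  haveI : Fact p.Prime := ⟨hp⟩
  haveI : NeZero p := ⟨hp.ne_zero⟩
  constructor
  · exact ⟨modelCS p, modelCS_σ p, model_trans p, model_level p, model_iso p⟩
  · intro X S hcard htr hml hiso
    refine ⟨modelCS p, modelCS_σ p, ?_⟩
    obtain ⟨F, hbij, hmul⟩ := model_uniq p hp X S hcard htr hml hiso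
    set E := Equiv.ofBijective F hbij with hE
    refine ⟨E.symm, E.symm.bijective, ?_⟩
    intro x y
    apply E.injective
    rw [E.apply_symm_apply]
    have hFx : F (E.symm x) = x := E.apply_symm_apply x
    have hFy : F (E.symm y) = y := E.apply_symm_apply y
    have h1 := hmul (E.symm x) (E.symm y)
    rw [hFx, hFy] at h1
    exact ((h1).symm.trans rfl)
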